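/- No computable transition system is divergence-preserving branching bisimilar to the transition system T1; hence the effective transition system T1 cannot be simulated by any computable transition system up to divergence-preserving branching bisimilarity. -/

import Mathlib

namespace RTMPaper

/-! ## Labelled transition systems

An `A`-labelled transition system; transition labels are drawn from `Option A`,
where `none` plays the role of the unobservable action τ. -/

structure LTS (A : Type) where
  State : Type
  tr : State → Option A → State → Prop
  init : State
  final : Set State

namespace LTS

variable {A : Type}

/-- A τ-step. -/
def tauStep (T : LTS A) (s t : T.State) : Prop := T.tr s none t

/-- `⇒` : the reflexive–transitive closure of τ-steps. -/
def tauReach (T : LTS A) : T.State → T.State → Prop :=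
  Relation.ReflTransGen T.tauStep

/-- `s —(a)→ t` : either `s —a→ t`, or `a = τ` and `s = t`. -/
def optStep (T : LTS A) (s : T.State) (a : Option A) (t : T.State) : Prop :=
  T.tr s a t ∨ (a = none ∧ s = t)

/-- The set of outgoing transitions of a state. -/
def out (T : LTS A) (s : T.State) : Set (Option A × T.State) :=
  {p | T.tr s p.1 p.2}

def FinitelyBranching (T : LTS A) : Prop := ∀ s, (T.out s).Finite

/-- The branching degree of `T` is bounded by `B`. -/
def BranchingDegreeBoundedBy (T : LTS A) (B : ℕ) : Prop :=
  ∀ s, (T.out s).Finite ∧ (T.out s).ncard ≤ B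

def BoundedlyBranching (T : LTS A) : Prop := ∃ B, T.BranchingDegreeBoundedBy B

/-- A deterministic transition system. -/
def Deterministic (T : LTS A) : Prop :=
  (∀ s a t₁ t₂, T.tr s a t₁ → T.tr s a t₂ → t₁ = t₂) ∧
  (∀ s t, T.tr s none t → ∀ a u, T.tr s a u → a = none)

/-- Relabelling of an LTS along a map of action alphabets (τ is mapped to τ). -/
def relabel {A' : Type} (f : A → A') (T : LTS A) : LTS A' where
  State := T.State
  tr s a t := ∃ a₀ : Option A, T.tr s a₀ t ∧ a = Option.map f a₀
  init := T.init
  final := T.final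

end LTS

/-! ## (Divergence-preserving) branching bisimilarity -/

structure IsBranchingBisimulation {A : Type} (T₁ T₂ : LTS A)
    (R : T₁.State → T₂.State → Prop) : Prop where
  fwd : ∀ s₁ s₂ a s₁', R s₁ s₂ → T₁.tr s₁ a s₁' →
    ∃ s₂'' s₂', T₂.tauReach s₂ s₂'' ∧ T₂.optStep s₂'' a s₂' ∧ R s₁ s₂'' ∧ R s₁' s₂'
  bwd : ∀ s₁ s₂ a s₂', R s₁ s₂ → T₂.tr s₂ a s₂' →
    ∃ s₁'' s₁', T₁.tauReach s₁ s₁'' ∧ T₁.optStep s₁'' a s₁' ∧ R s₁'' s₂ ∧ R s₁' s₂'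
  finFwd : ∀ s₁ s₂, R s₁ s₂ → s₁ ∈ T₁.final →
    ∃ s₂', T₂.tauReach s₂ s₂' ∧ R s₁ s₂' ∧ s₂' ∈ T₂.final
  finBwd : ∀ s₁ s₂, R s₁ s₂ → s₂ ∈ T₂.final →
    ∃ s₁', T₁.tauReach s₁ s₁' ∧ R s₁' s₂ ∧ s₁' ∈ T₁.final

/-- The divergence-preservation conditions on a branching bisimulation. -/
def DivergencePreserving {A : Type} (T₁ T₂ : LTS A)
    (R : T₁.State → T₂.State → Prop) : Prop :=
  (∀ (s₂ : T₂.State) (f : ℕ → T₁.State),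
      (∀ i, T₁.tauStep (f i) (f (i + 1))) → (∀ i, R (f i) s₂) →
      ∃ s₂', Relation.TransGen T₂.tauStep s₂ s₂' ∧ ∃ i, R (f i) s₂') ∧
  (∀ (s₁ : T₁.State) (f : ℕ → T₂.State),
      (∀ i, T₂.tauStep (f i) (f (i + 1))) → (∀ i, R s₁ (f i)) →
      ∃ s₁', Relation.TransGen T₁.tauStep s₁ s₁' ∧ ∃ i, R s₁' (f i))

/-- `T₁ ≈b T₂` : branching bisimilarity. -/
def BranchingBisimilar {A : Type} (T₁ T₂ : LTS A) : Prop :=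
  ∃ R, IsBranchingBisimulation T₁ T₂ R ∧ R T₁.init T₂.init

/-- `T₁ ≈Δb T₂` : divergence-preserving branching bisimilarity. -/
def DPBranchingBisimilar {A : Type} (T₁ T₂ : LTS A) : Prop :=
  ∃ R, IsBranchingBisimulation T₁ T₂ R ∧ DivergencePreserving T₁ T₂ R ∧
    R T₁.init T₂.init

/-! ## Effective and computable transition systems -/

/-- A set of natural numbers is recursively enumerable. -/
def REset (X : Set ℕ) : Prop :=
  ∃ f : ℕ →. Unit, Partrec f ∧ ∀ n, (f n).Dom ↔ n ∈ X

/-- A (finitely branching) LTS is computable if, with respect to some injective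
codings of its labels and states into ℕ, the functions `out` and `fin` are
recursive. -/
def LTS.IsComputable {A : Type} (T : LTS A) : Prop :=
  ∃ hfb : ∀ s, (T.out s).Finite,
    ∃ (cL : Option A → ℕ) (cS : T.State → ℕ),
      Function.Injective cL ∧ Function.Injective cS ∧
      (∃ fo : ℕ → ℕ, Computable fo ∧ ∀ s,
        fo (cS s) =
          Encodable.encode
            (((hfb s).toFinset).image fun p => Nat.pair (cL p.1) (cS p.2))) ∧
      (∃ ff : ℕ → ℕ, Computable ff ∧ ∀ s,
        (s ∈ T.final → ff (cS s) = 1) ∧ (s ∉ T.final → ff (cS s) = 0))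

/-- A (finitely branching) LTS is effective if, with respect to some injective
codings of its labels and states into ℕ, its transition relation and its set of
final states are recursively enumerable. -/
def LTS.IsEffective {A : Type} (T : LTS A) : Prop :=
  T.FinitelyBranching ∧
  ∃ (cL : Option A → ℕ) (cS : T.State → ℕ),
    Function.Injective cL ∧ Function.Injective cS ∧
    REset {n | ∃ s a t, T.tr s a t ∧ n = Nat.pair (cS s) (Nat.pair (cL a) (cS t))} ∧
    REset {n | ∃ s ∈ T.final, n = cS s}

/-! ## Reactive Turing machines -/

inductive Move : Type
  | L | R
deriving DecidableEq

instance : Fintype Move :=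
  ⟨{Move.L, Move.R}, fun x => by cases x <;> simp⟩

/-- A tape instance: the content left of the head (nearest symbol first), the
symbol under the head, and the content right of the head (nearest symbol
first).  Tape symbols are `Option D`, with `none` the blank symbol □. -/
structure Tape (D : Type) where
  left : List (Option D)
  head : Option D
  right : List (Option D)

def Tape.empty (D : Type) : Tape D := ⟨[], none, []⟩

/-- Write `e` at the head position and move the head in direction `m`. -/
def Tape.writeMove {D : Type} (t : Tape D) (e : Option D) : Move → Tape D
  | .L =>
    match t.left with
    | [] => ⟨[], none, e :: t.right⟩
    | x :: l => ⟨l, x, e :: t.right⟩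
  | .R =>
    match t.right with
    | [] => ⟨e :: t.left, none, []⟩
    | x :: r => ⟨e :: t.left, x, r⟩

/-- A reactive Turing machine with action symbols `A` (labels `Option A`,
`none` being τ) and data symbols `D` (tape symbols `Option D`, `none` being
the blank symbol). -/
structure RTM (A D : Type) where
  Q : Type
  [instQ : Fintype Q]
  trans : Q → Option D → Option A → Option D → Move → Q → Prop
  init : Q
  final : Set Q

attribute [instance] RTM.instQ

/-- The transition system `T(M)` associated with an RTM `M`. -/
def RTM.lts {A D : Type} (M : RTM A D) : LTS A where
  State := M.Q × Tape D
  tr c a c' := ∃ e m, M.trans c.1 c.2.head a e m c'.1 ∧ c'.2 = c.2.writeMove e m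
  init := (M.init, Tape.empty D)
  final := {c | c.1 ∈ M.final}

def RTM.Deterministic {A D : Type} (M : RTM A D) : Prop :=
  (∀ s d a e₁ m₁ t₁ e₂ m₂ t₂, M.trans s d a e₁ m₁ t₁ → M.trans s d a e₂ m₂ t₂ →
      e₁ = e₂ ∧ m₁ = m₂ ∧ t₁ = t₂) ∧
  (∀ s d e₁ m₁ t₁, M.trans s d none e₁ m₁ t₁ →
      ∀ a e₂ m₂ t₂, M.trans s d a e₂ m₂ t₂ → a = none)

/-! ## Actions over channels, and parallel composition -/

/-- Actions over a set `C` of channels with communicated values in `V`,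
together with further (base) actions from `B`:  `recv c v` is `c?v`,
`send c v` is `c!v`. -/
inductive CAct (C V B : Type) : Type
  | recv : C → V → CAct C V B
  | send : C → V → CAct C V B
  | base : B → CAct C V B
deriving DecidableEq

/-- The (possibly silent) action `a` is a communication action on one of the
channels in `C'`. -/
def IsComm {C V B : Type} (C' : Set C) : Option (CAct C V B) → Prop
  | some (.recv c _) => c ∈ C'
  | some (.send c _) => c ∈ C'
  | _ => False

/-- Parallel composition `[T₁ ∥ T₂]_{C'}` of transition systems, enforcing
communication on the channels in `C'`. -/
def parLTS {C V B : Type} (C' : Set C) (T₁ T₂ : LTS (CAct C V B)) :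
    LTS (CAct C V B) where
  State := T₁.State × T₂.State
  init := (T₁.init, T₂.init)
  final := {p | p.1 ∈ T₁.final ∧ p.2 ∈ T₂.final}
  tr p a p' :=
    ¬ IsComm C' a ∧
    ((T₁.tr p.1 a p'.1 ∧ p.2 = p'.2) ∨
     (T₂.tr p.2 a p'.2 ∧ p.1 = p'.1) ∨
     (a = none ∧ ∃ c ∈ C', ∃ d : V,
        (T₁.tr p.1 (some (.send c d)) p'.1 ∧ T₂.tr p.2 (some (.recv c d)) p'.2) ∨
        (T₁.tr p.1 (some (.recv c d)) p'.1 ∧ T₂.tr p.2 (some (.send c d)) p'.2)))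

/-- The behaviour of `sender(M)`: output the symbols of `w` one by one along
channel `cu`, then halt in a final state. -/
def outputLTS {C V B : Type} (cu : C) (w : List V) : LTS (CAct C V B) where
  State := List V
  tr s a t := ∃ d, s = d :: t ∧ a = some (.send cu d)
  init := w
  final := {([] : List V)}

/-- A concrete (syntactic, Gödel-numberable) presentation of a reactive Turing
machine: states are `Fin (n+1)`, and the transition relation is a finite set of
tuples. -/
structure RTMc (A D : Type) where
  n : ℕ
  trans : Finset (Fin (n + 1) × Option D × Option A × Option D × Move × Fin (n + 1))
  init : Fin (n + 1)
  final : Finset (Fin (n + 1))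

def RTMc.toRTM {A D : Type} (M : RTMc A D) : RTM A D where
  Q := Fin (M.n + 1)
  trans s d a e m t := (s, d, a, e, m, t) ∈ M.trans
  init := M.init
  final := (↑M.final : Set (Fin (M.n + 1)))

end RTMPaper

namespace RTMPaper

/-- The action alphabet `A = {a, b}`. -/
inductive AB : Type
  | a | b
deriving DecidableEq

instance : Fintype AB :=
  ⟨{AB.a, AB.b}, fun x => by cases x <;> simp⟩

/-- The states of the transition system `T₁`. -/
inductive T1State : Type
  | s : ℕ → T1State
  | t : ℕ → T1State

/-- The transition system `T₁`: `s_x —a→ s_{x+1}`, `s_x —b→ t_x`, and `t_x` is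
final iff `φ_x(x)` converges. -/
def T1 : LTS AB where
  State := T1State
  init := .s 0
  final := {q | ∃ x, q = .t x ∧ ((Denumerable.ofNat Nat.Partrec.Code x).eval x).Dom}
  tr p α q :=
    (∃ x, p = .s x ∧ α = some .a ∧ q = .s (x + 1)) ∨
    (∃ x, p = .s x ∧ α = some .b ∧ q = .t x)

/-! ### Auxiliary material for Statement 3 -/

section Statement3Aux

open Encodable

/-! #### Basic facts about `T1` -/

lemma T1_no_tau {p q : T1.State} : ¬ T1.tr p none q := by
  rintro (⟨x, _, h, _⟩ | ⟨x, _, h, _⟩) <;> simp at h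

lemma T1_tauReach_eq {p q : T1.State} (h : T1.tauReach p q) : p = q := by
  induction h with
  | refl => rfl
  | tail _ h2 _ => exact absurd h2 T1_no_tau

lemma T1_no_transGen {p q : T1.State} : ¬ Relation.TransGen T1.tauStep p q := by
  intro h
  cases h with
  | single h => exact T1_no_tau h
  | tail _ h => exact T1_no_tau h

lemma T1_tr_s_a {x : ℕ} {q : T1.State} (h : T1.tr (.s x) (some .a) q) :
    q = .s (x + 1) := by
  rcases h with ⟨y, hs, _, hq⟩ | ⟨y, hs, hl, _⟩
  · cases hs; exact hq
  · exact absurd (Option.some.inj hl) (by simp)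

lemma T1_tr_s_b {x : ℕ} {q : T1.State} (h : T1.tr (.s x) (some .b) q) :
    q = .t x := by
  rcases h with ⟨y, hs, hl, _⟩ | ⟨y, hs, _, hq⟩
  · exact absurd (Option.some.inj hl) (by simp)
  · cases hs; exact hq

lemma T1_tr_sa_ex (x : ℕ) : T1.tr (.s x) (some .a) (.s (x + 1)) :=
  Or.inl ⟨x, rfl, rfl, rfl⟩

lemma T1_tr_sb_ex (x : ℕ) : T1.tr (.s x) (some .b) (.t x) :=
  Or.inr ⟨x, rfl, rfl, rfl⟩

lemma T1_final_t (x : ℕ) :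
    (T1State.t x ∈ T1.final) ↔ ((Denumerable.ofNat Nat.Partrec.Code x).eval x).Dom := by
  constructor
  · rintro ⟨y, hy, hd⟩
    cases hy; exact hd
  · intro h; exact ⟨x, rfl, h⟩



/-! #### The search procedure (pure definitions) -/

/-- decoded list of (label, target)-codes of transitions out of state code `n` -/
def pairsL (fo : ℕ → ℕ) (n : ℕ) : List ℕ :=
  (Encodable.decode (α := List ℕ) (fo n)).getD []

/-- codes of `k`-labelled successors of state code `n` -/
def succsL (fo : ℕ → ℕ) (k n : ℕ) : List ℕ :=
  (pairsL fo n).flatMap fun p => if p.unpair.1 = k then [p.unpair.2] else []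

/-- one step of saturation under τ-successors -/
def stepL (fo : ℕ → ℕ) (kt : ℕ) (L : List ℕ) : List ℕ :=
  L ++ (L.flatMap (succsL fo kt)).flatMap fun m => if m ∈ L then [] else [m]

/-- `fuel`-fold saturation starting from `[n]` -/
def closeL (fo : ℕ → ℕ) (kt fuel n : ℕ) : List ℕ :=
  (stepL fo kt)^[fuel] [n]

/-- the τ-closure of `n`, provided `fuel` saturation steps suffice -/
def clO (fo : ℕ → ℕ) (kt fuel n : ℕ) : Option (List ℕ) :=
  if stepL fo kt (closeL fo kt fuel n) = closeL fo kt fuel n then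
    some (closeL fo kt fuel n) else none

/-- some `k`-successor of some state in the τ-closure of `n` -/
def nextO (fo : ℕ → ℕ) (kt k fuel n : ℕ) : Option ℕ :=
  (clO fo kt fuel n).bind fun L => (L.flatMap (succsL fo k)).head?

/-- the state code reached after `x` rounds of (τ-closure; a-step) -/
def chainO (fo : ℕ → ℕ) (kt ka n0 fuel : ℕ) : ℕ → Option ℕ
  | 0 => some n0
  | x + 1 => (chainO fo kt ka n0 fuel x).bind (nextO fo kt ka fuel)

/-- the full procedure: follow `x` a-steps, one b-step, then test for a
reachable final state -/
def GFun (fo ff : ℕ → ℕ) (kt ka kb n0 fuel x : ℕ) : Option Bool :=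
  (chainO fo kt ka n0 fuel x).bind fun n =>
  (nextO fo kt kb fuel n).bind fun v =>
  (clO fo kt fuel v).map fun L =>
    decide ((L.flatMap fun m => if ff m = 1 then [m] else []) ≠ [])

/-- the diagonal halting predicate -/
def haltP (x : ℕ) : Prop := ((Denumerable.ofNat Nat.Partrec.Code x).eval x).Dom

lemma multiset_decode_list (s : Multiset ℕ) :
    ∃ l : List ℕ, Encodable.decode (α := List ℕ) (Encodable.encode s) = some l ∧
      (l : Multiset ℕ) = s := by
  have h' : (((↑) : List ℕ → Multiset ℕ) <$>
      Encodable.decode (α := List ℕ) (Encodable.encode s)) = some s :=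
    Encodable.encodek s
  rcases hd : Encodable.decode (α := List ℕ) (Encodable.encode s) with _ | l
  · rw [hd] at h'; simp at h'
  · rw [hd] at h'; simp at h'; exact ⟨l, rfl, h'⟩

/-! #### A bundled setup: a computable LTS that is dp-branching-bisimilar to `T1` -/

structure Setup (T' : LTS AB) where
  R : T1.State → T'.State → Prop
  hB : IsBranchingBisimulation T1 T' R
  hD : DivergencePreserving T1 T' R
  hfb : ∀ s, (T'.out s).Finite
  cL : Option AB → ℕ
  cS : T'.State → ℕ
  injL : Function.Injective cL
  injS : Function.Injective cS
  fo : ℕ → ℕ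
  cfo : Computable fo
  hfo : ∀ s, fo (cS s) =
    Encodable.encode (((hfb s).toFinset).image fun p => Nat.pair (cL p.1) (cS p.2))
  ff : ℕ → ℕ
  cff : Computable ff
  hff : ∀ s, (s ∈ T'.final → ff (cS s) = 1) ∧ (s ∉ T'.final → ff (cS s) = 0)
  hinit : R T1.init T'.init

namespace Setup

variable {T' : LTS AB} (S : Setup T')

/-- code of τ -/
def kt : ℕ := S.cL none
/-- code of action a -/
def ka : ℕ := S.cL (some .a)
/-- code of action b -/
def kb : ℕ := S.cL (some .b)
/-- code of the initial state -/
def n0 : ℕ := S.cS T'.init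

/-! #### Transfer of relatedness along transitions -/

lemma rel_tau {s₁ : T1.State} {u v : T'.State} (hR : S.R s₁ u) (h : T'.tauStep u v) :
    S.R s₁ v := by
  obtain ⟨s₁'', s₁', hre, hopt, _, hR'⟩ := S.hB.bwd s₁ u none v hR h
  cases T1_tauReach_eq hre
  rcases hopt with h' | ⟨-, rfl⟩
  · exact absurd h' T1_no_tau
  · exact hR'

lemma rel_tauReach {s₁ : T1.State} {u v : T'.State} (hR : S.R s₁ u)
    (h : T'.tauReach u v) : S.R s₁ v := by
  induction h with
  | refl => exact hR
  | tail _ h2 ih => exact S.rel_tau ih h2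

lemma rel_a {x : ℕ} {u v : T'.State} (hR : S.R (.s x) u)
    (h : T'.tr u (some .a) v) : S.R (.s (x + 1)) v := by
  obtain ⟨s₁'', s₁', hre, hopt, _, hR'⟩ := S.hB.bwd _ u (some .a) v hR h
  cases T1_tauReach_eq hre
  rcases hopt with h' | ⟨h', -⟩
  · cases T1_tr_s_a h'; exact hR'
  · simp at h'

lemma rel_b {x : ℕ} {u v : T'.State} (hR : S.R (.s x) u)
    (h : T'.tr u (some .b) v) : S.R (.t x) v := by
  obtain ⟨s₁'', s₁', hre, hopt, _, hR'⟩ := S.hB.bwd _ u (some .b) v hR h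
  cases T1_tauReach_eq hre
  rcases hopt with h' | ⟨h', -⟩
  · cases T1_tr_s_b h'; exact hR'
  · simp at h'

lemma ex_a {x : ℕ} {u : T'.State} (hR : S.R (.s x) u) :
    ∃ u' v, T'.tauReach u u' ∧ T'.tr u' (some .a) v := by
  obtain ⟨s₂'', s₂', hre, hopt, _, _⟩ := S.hB.fwd _ u (some .a) _ hR (T1_tr_sa_ex x)
  rcases hopt with h' | ⟨h', -⟩
  · exact ⟨s₂'', s₂', hre, h'⟩
  · simp at h'

lemma ex_b {x : ℕ} {u : T'.State} (hR : S.R (.s x) u) :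
    ∃ u' v, T'.tauReach u u' ∧ T'.tr u' (some .b) v := by
  obtain ⟨s₂'', s₂', hre, hopt, _, _⟩ := S.hB.fwd _ u (some .b) _ hR (T1_tr_sb_ex x)
  rcases hopt with h' | ⟨h', -⟩
  · exact ⟨s₂'', s₂', hre, h'⟩
  · simp at h'

lemma final_iff {x : ℕ} {v : T'.State} (hR : S.R (.t x) v) :
    (T1State.t x ∈ T1.final) ↔ ∃ w, T'.tauReach v w ∧ w ∈ T'.final := by
  constructor
  · intro hfin
    obtain ⟨v', hre, _, hfin'⟩ := S.hB.finFwd _ v hR hfin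
    exact ⟨v', hre, hfin'⟩
  · rintro ⟨w, hre, hfin⟩
    obtain ⟨s₁', hre', _, hfin'⟩ := S.hB.finBwd _ w (S.rel_tauReach hR hre) hfin
    cases T1_tauReach_eq hre'
    exact hfin'


/-! #### Semantics of the search procedure -/

lemma pairs_mem (s : T'.State) (p : ℕ) :
    p ∈ pairsL S.fo (S.cS s) ↔ ∃ a t, T'.tr s a t ∧ p = Nat.pair (S.cL a) (S.cS t) := by
  have henc : S.fo (S.cS s) =
      Encodable.encode ((((S.hfb s).toFinset).image fun p => Nat.pair (S.cL p.1) (S.cS p.2)).val) :=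
    S.hfo s
  obtain ⟨l, hdec, hval⟩ := multiset_decode_list
    ((((S.hfb s).toFinset).image fun p => Nat.pair (S.cL p.1) (S.cS p.2)).val)
  have : pairsL S.fo (S.cS s) = l := by
    unfold pairsL; rw [henc, hdec]; rfl
  rw [this]
  have hmem : p ∈ l ↔
      p ∈ (((S.hfb s).toFinset).image fun p => Nat.pair (S.cL p.1) (S.cS p.2)) := by
    rw [Finset.mem_def, ← hval, Multiset.mem_coe]
  rw [hmem, Finset.mem_image]
  constructor
  · rintro ⟨q, hq, rfl⟩
    rw [Set.Finite.mem_toFinset] at hq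
    exact ⟨q.1, q.2, hq, rfl⟩
  · rintro ⟨a, t, ht, rfl⟩
    exact ⟨(a, t), (Set.Finite.mem_toFinset _).2 ht, rfl⟩

lemma succs_mem (a : Option AB) (s : T'.State) (m : ℕ) :
    m ∈ succsL S.fo (S.cL a) (S.cS s) ↔ ∃ t, T'.tr s a t ∧ m = S.cS t := by
  unfold succsL
  rw [List.mem_flatMap]
  constructor
  · rintro ⟨p, hp, hm⟩
    obtain ⟨a', t, ht, rfl⟩ := (S.pairs_mem s p).1 hp
    rw [Nat.unpair_pair] at hm
    by_cases hlab : S.cL a' = S.cL a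
    · cases S.injL hlab
      rw [if_pos rfl] at hm
      simp only [List.mem_singleton] at hm
      exact ⟨t, ht, hm⟩
    · rw [if_neg hlab] at hm
      simp at hm
  · rintro ⟨t, ht, rfl⟩
    refine ⟨Nat.pair (S.cL a) (S.cS t), (S.pairs_mem s _).2 ⟨a, t, ht, rfl⟩, ?_⟩
    rw [Nat.unpair_pair]
    simp

/-! #### No divergence, and finiteness of τ-reachable sets -/

lemma acc_tau {s₁ : T1.State} {u : T'.State} (hR : S.R s₁ u) :
    Acc (fun v w : T'.State => T'.tauStep w v) u := by
  by_contra hacc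
  have key : ∀ v : {v : T'.State // S.R s₁ v ∧ ¬ Acc (fun v w : T'.State => T'.tauStep w v) v},
      {w : {w : T'.State // S.R s₁ w ∧ ¬ Acc (fun v w : T'.State => T'.tauStep w v) w} //
        T'.tauStep v.1 w.1} := by
    intro ⟨v, hv, hnacc⟩
    have : ∃ w, T'.tauStep v w ∧ ¬ Acc (fun v w : T'.State => T'.tauStep w v) w := by
      by_contra h
      push_neg at h
      exact hnacc (Acc.intro v fun w hw => h w hw)
    exact ⟨⟨this.choose, S.rel_tau hv this.choose_spec.1, this.choose_spec.2⟩,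
      this.choose_spec.1⟩
  let F : ℕ → {v : T'.State // S.R s₁ v ∧ ¬ Acc (fun v w : T'.State => T'.tauStep w v) v} :=
    fun n => Nat.rec ⟨u, hR, hacc⟩ (fun _ p => (key p).1) n
  have hstep : ∀ n, T'.tauStep (F n).1 (F (n + 1)).1 := fun n => (key (F n)).2
  obtain ⟨s₁', htg, -⟩ := S.hD.2 s₁ (fun n => (F n).1) hstep (fun n => (F n).2.1)
  exact T1_no_transGen htg

lemma reach_finite {s₁ : T1.State} {u : T'.State} (hR : S.R s₁ u) :
    {v | T'.tauReach u v}.Finite := by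
  have key : ∀ u : T'.State, Acc (fun v w : T'.State => T'.tauStep w v) u →
      {v | T'.tauReach u v}.Finite := by
    intro u h
    induction h with
    | intro u _ ih =>
      have hsub : {v | T'.tauReach u v} ⊆
          {u} ∪ ⋃ v ∈ {v | T'.tauStep u v}, {w | T'.tauReach v w} := by
        intro w hw
        rcases Relation.ReflTransGen.cases_head hw with rfl | ⟨v, hv, hr⟩
        · exact Or.inl rfl
        · exact Or.inr (Set.mem_biUnion hv hr)
      have hfinsucc : {v | T'.tauStep u v}.Finite := by
        apply ((S.hfb u).image Prod.snd).subset
        intro v hv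
        exact ⟨(none, v), hv, rfl⟩
      exact ((Set.finite_singleton u).union
        (hfinsucc.biUnion fun v hv => ih v hv)).subset hsub
  exact key u (S.acc_tau hR)

/-! #### Closure computation: soundness, completeness, termination -/

/-- every entry of `L` is the code of a state τ-reachable from `u` -/
def SoundFor (u : T'.State) (L : List ℕ) : Prop :=
  ∀ m ∈ L, ∃ w, T'.tauReach u w ∧ m = S.cS w

lemma subset_stepL (fo : ℕ → ℕ) (kt : ℕ) (L : List ℕ) : L ⊆ stepL fo kt L :=
  List.subset_append_left _ _

lemma sound_step {u : T'.State} {L : List ℕ} (h : S.SoundFor u L) :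
    S.SoundFor u (stepL S.fo S.kt L) := by
  intro m hm
  rcases List.mem_append.1 hm with hm | hm
  · exact h m hm
  · rw [List.mem_flatMap] at hm
    obtain ⟨j, hj, hm⟩ := hm
    rw [List.mem_flatMap] at hj
    obtain ⟨i, hi, hj⟩ := hj
    obtain ⟨w, hw, rfl⟩ := h i hi
    obtain ⟨t, ht, rfl⟩ := (S.succs_mem none w j).1 hj
    by_cases hmem : S.cS t ∈ L
    · rw [if_pos hmem] at hm; simp at hm
    · rw [if_neg hmem] at hm
      simp only [List.mem_singleton] at hm
      subst hm
      exact ⟨t, hw.tail ht, rfl⟩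

lemma sound_close (u : T'.State) (fuel : ℕ) :
    S.SoundFor u (closeL S.fo S.kt fuel (S.cS u)) := by
  induction fuel with
  | zero =>
    intro m hm
    simp only [closeL, Function.iterate_zero, id, List.mem_singleton] at hm
    exact ⟨u, Relation.ReflTransGen.refl, hm⟩
  | succ n ih =>
    rw [closeL, Function.iterate_succ_apply']
    exact S.sound_step ih

lemma self_mem_close (fo : ℕ → ℕ) (kt n fuel : ℕ) : n ∈ closeL fo kt fuel n := by
  induction fuel with
  | zero => simp [closeL]
  | succ k ih =>
    rw [closeL, Function.iterate_succ_apply']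
    exact subset_stepL fo kt _ ih

lemma closed_iff (fo : ℕ → ℕ) (kt : ℕ) (L : List ℕ) :
    stepL fo kt L = L ↔ ∀ m ∈ L, ∀ j ∈ succsL fo kt m, j ∈ L := by
  constructor
  · intro h m hm j hj
    by_contra hjL
    have hmem : j ∈ stepL fo kt L := by
      apply List.mem_append.2
      right
      rw [List.mem_flatMap]
      refine ⟨j, List.mem_flatMap.2 ⟨m, hm, hj⟩, ?_⟩
      rw [if_neg hjL]
      simp
    rw [h] at hmem
    exact hjL hmem
  · intro h
    unfold stepL
    have : ((L.flatMap (succsL fo kt)).flatMap fun m => if m ∈ L then [] else [m]) = [] := by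
      rw [List.flatMap_eq_nil_iff]
      intro j hj
      rw [List.mem_flatMap] at hj
      obtain ⟨m, hm, hj⟩ := hj
      rw [if_pos (h m hm j hj)]
    rw [this, List.append_nil]

lemma closed_complete {u : T'.State} {L : List ℕ}
    (hc : stepL S.fo S.kt L = L) (hu : S.cS u ∈ L) :
    ∀ w, T'.tauReach u w → S.cS w ∈ L := by
  intro w hw
  induction hw with
  | refl => exact hu
  | tail h1 h2 ih =>
    rename_i w' w''
    exact (closed_iff S.fo S.kt L).1 hc (S.cS w') ih (S.cS w'')
      ((S.succs_mem none w' (S.cS w'')).2 ⟨w'', h2, rfl⟩)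

lemma close_stable (fo : ℕ → ℕ) (kt n fuel : ℕ)
    (hc : stepL fo kt (closeL fo kt fuel n) = closeL fo kt fuel n) :
    ∀ fuel' ≥ fuel, closeL fo kt fuel' n = closeL fo kt fuel n := by
  intro fuel' hf
  obtain ⟨k, rfl⟩ := Nat.exists_eq_add_of_le hf
  rw [closeL, Nat.add_comm, Function.iterate_add_apply]
  exact Function.iterate_fixed hc k

lemma exists_closed {s₁ : T1.State} {u : T'.State} (hR : S.R s₁ u) :
    ∃ fuel, stepL S.fo S.kt (closeL S.fo S.kt fuel (S.cS u)) = closeL S.fo S.kt fuel (S.cS u) := by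
  by_contra hnc
  push_neg at hnc
  set K : Finset ℕ := ((S.reach_finite hR).image S.cS).toFinset with hK
  have hsub : ∀ fuel, (closeL S.fo S.kt fuel (S.cS u)).toFinset ⊆ K := by
    intro fuel m hm
    rw [List.mem_toFinset] at hm
    obtain ⟨w, hw, rfl⟩ := S.sound_close u fuel m hm
    rw [hK, Set.Finite.mem_toFinset]
    exact ⟨w, hw, rfl⟩
  have hgrow : ∀ fuel, (closeL S.fo S.kt fuel (S.cS u)).toFinset ⊂
      (closeL S.fo S.kt (fuel + 1) (S.cS u)).toFinset := by
    intro fuel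
    set L := closeL S.fo S.kt fuel (S.cS u) with hL
    have hstep : closeL S.fo S.kt (fuel + 1) (S.cS u) = stepL S.fo S.kt L := by
      rw [closeL, Function.iterate_succ_apply']; rfl
    constructor
    · intro m hm
      rw [List.mem_toFinset] at hm
      rw [hstep, List.mem_toFinset]
      exact subset_stepL _ _ _ hm
    · intro hsub'
      apply hnc fuel
      rw [← hL]
      -- show stepL L = L
      rw [closed_iff]
      intro m hm j hj
      have : j ∈ stepL S.fo S.kt L ∨ j ∈ L := by
        by_cases hjL : j ∈ L
        · exact Or.inr hjL
        · left
          apply List.mem_append.2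
          right
          rw [List.mem_flatMap]
          refine ⟨j, List.mem_flatMap.2 ⟨m, hm, hj⟩, ?_⟩
          rw [if_neg hjL]; simp
      rcases this with hmem | hmem
      · have := hsub' (List.mem_toFinset.2 (hstep ▸ hmem : j ∈ closeL S.fo S.kt (fuel + 1) (S.cS u)))
        exact List.mem_toFinset.1 this
      · exact hmem
  have hcard : ∀ fuel, fuel + 1 ≤ (closeL S.fo S.kt fuel (S.cS u)).toFinset.card := by
    intro fuel
    induction fuel with
    | zero =>
      have : (S.cS u) ∈ (closeL S.fo S.kt 0 (S.cS u)).toFinset :=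
        List.mem_toFinset.2 (self_mem_close _ _ _ _)
      exact Finset.card_pos.2 ⟨_, this⟩
    | succ k ih =>
      have := Finset.card_lt_card (hgrow k)
      omega
  have := hcard K.card
  have := Finset.card_le_card (hsub K.card)
  omega

/-! #### Stage lemmas -/

lemma clO_some_iff (fo : ℕ → ℕ) (kt fuel n : ℕ) (L : List ℕ) :
    clO fo kt fuel n = some L ↔ stepL fo kt L = L ∧ L = closeL fo kt fuel n := by
  unfold clO
  split_ifs with h
  · simp only [Option.some.injEq]
    constructor
    · intro he; exact ⟨he ▸ h, he.symm⟩
    · rintro ⟨-, rfl⟩; rfl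
  · simp only [reduceCtorEq, false_iff, not_and]
    intro hc he
    exact h (he ▸ hc)

lemma next_sound_a {i : ℕ} {u : T'.State} {m fuel : ℕ} (hR : S.R (.s i) u)
    (h : nextO S.fo S.kt S.ka fuel (S.cS u) = some m) :
    ∃ v, S.R (.s (i + 1)) v ∧ m = S.cS v := by
  unfold nextO at h
  rcases hcl : clO S.fo S.kt fuel (S.cS u) with _ | L
  · rw [hcl] at h; simp at h
  · rw [hcl] at h
    simp only [Option.bind_some] at h
    have hm : m ∈ L.flatMap (succsL S.fo S.ka) := List.mem_of_mem_head? (by rw [h]; rfl)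
    obtain ⟨hc, hLc⟩ := (clO_some_iff _ _ _ _ _).1 hcl
    rw [List.mem_flatMap] at hm
    obtain ⟨m', hm', hmm⟩ := hm
    obtain ⟨u', hu', rfl⟩ := S.sound_close u fuel m' (hLc ▸ hm')
    obtain ⟨v, hv, rfl⟩ := (S.succs_mem (some .a) u' m).1 hmm
    exact ⟨v, S.rel_a (S.rel_tauReach hR hu') hv, rfl⟩

lemma next_sound_b {i : ℕ} {u : T'.State} {m fuel : ℕ} (hR : S.R (.s i) u)
    (h : nextO S.fo S.kt S.kb fuel (S.cS u) = some m) :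
    ∃ v, S.R (.t i) v ∧ m = S.cS v := by
  unfold nextO at h
  rcases hcl : clO S.fo S.kt fuel (S.cS u) with _ | L
  · rw [hcl] at h; simp at h
  · rw [hcl] at h
    simp only [Option.bind_some] at h
    have hm : m ∈ L.flatMap (succsL S.fo S.kb) := List.mem_of_mem_head? (by rw [h]; rfl)
    obtain ⟨hc, hLc⟩ := (clO_some_iff _ _ _ _ _).1 hcl
    rw [List.mem_flatMap] at hm
    obtain ⟨m', hm', hmm⟩ := hm
    obtain ⟨u', hu', rfl⟩ := S.sound_close u fuel m' (hLc ▸ hm')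
    obtain ⟨v, hv, rfl⟩ := (S.succs_mem (some .b) u' m).1 hmm
    exact ⟨v, S.rel_b (S.rel_tauReach hR hu') hv, rfl⟩

lemma clO_total {s₁ : T1.State} {u : T'.State} (hR : S.R s₁ u) :
    ∃ fuel₀ L, ∀ fuel ≥ fuel₀, clO S.fo S.kt fuel (S.cS u) = some L := by
  obtain ⟨fuel₀, hc⟩ := S.exists_closed hR
  refine ⟨fuel₀, closeL S.fo S.kt fuel₀ (S.cS u), fun fuel hf => ?_⟩
  have := close_stable S.fo S.kt (S.cS u) fuel₀ hc fuel hf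
  rw [clO, this, if_pos hc]

lemma next_total_a {i : ℕ} {u : T'.State} (hR : S.R (.s i) u) :
    ∃ fuel₀ m, (∃ v, S.R (.s (i + 1)) v ∧ m = S.cS v) ∧
      ∀ fuel ≥ fuel₀, nextO S.fo S.kt S.ka fuel (S.cS u) = some m := by
  obtain ⟨fuel₀, L, hL⟩ := S.clO_total hR
  have hcl := hL fuel₀ le_rfl
  obtain ⟨hc, hLc⟩ := (clO_some_iff _ _ _ _ _).1 hcl
  obtain ⟨u', v, hre, htr⟩ := S.ex_a hR
  have hu' : S.cS u' ∈ L := by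
    rw [hLc]
    exact S.closed_complete (hLc ▸ hc) (self_mem_close _ _ _ _) u' hre
  have hv : S.cS v ∈ succsL S.fo S.ka (S.cS u') := (S.succs_mem (some .a) u' _).2 ⟨v, htr, rfl⟩
  have hne : L.flatMap (succsL S.fo S.ka) ≠ [] :=
    List.ne_nil_of_mem (List.mem_flatMap.2 ⟨_, hu', hv⟩)
  rcases hh : (L.flatMap (succsL S.fo S.ka)).head? with _ | m
  · exact absurd (List.head?_eq_none_iff.1 hh) hne
  · refine ⟨fuel₀, m, ?_, fun fuel hf => ?_⟩
    · exact S.next_sound_a hR (by rw [nextO, hcl, Option.bind_some, hh])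
    · rw [nextO, hL fuel hf, Option.bind_some, hh]

lemma next_total_b {i : ℕ} {u : T'.State} (hR : S.R (.s i) u) :
    ∃ fuel₀ m, (∃ v, S.R (.t i) v ∧ m = S.cS v) ∧
      ∀ fuel ≥ fuel₀, nextO S.fo S.kt S.kb fuel (S.cS u) = some m := by
  obtain ⟨fuel₀, L, hL⟩ := S.clO_total hR
  have hcl := hL fuel₀ le_rfl
  obtain ⟨hc, hLc⟩ := (clO_some_iff _ _ _ _ _).1 hcl
  obtain ⟨u', v, hre, htr⟩ := S.ex_b hR
  have hu' : S.cS u' ∈ L := by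
    rw [hLc]
    exact S.closed_complete (hLc ▸ hc) (self_mem_close _ _ _ _) u' hre
  have hv : S.cS v ∈ succsL S.fo S.kb (S.cS u') := (S.succs_mem (some .b) u' _).2 ⟨v, htr, rfl⟩
  have hne : L.flatMap (succsL S.fo S.kb) ≠ [] :=
    List.ne_nil_of_mem (List.mem_flatMap.2 ⟨_, hu', hv⟩)
  rcases hh : (L.flatMap (succsL S.fo S.kb)).head? with _ | m
  · exact absurd (List.head?_eq_none_iff.1 hh) hne
  · refine ⟨fuel₀, m, ?_, fun fuel hf => ?_⟩
    · exact S.next_sound_b hR (by rw [nextO, hcl, Option.bind_some, hh])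
    · rw [nextO, hL fuel hf, Option.bind_some, hh]

lemma hinit' : S.R (.s 0) T'.init := S.hinit

lemma chain_sound : ∀ x fuel n, chainO S.fo S.kt S.ka S.n0 fuel x = some n →
    ∃ u, S.R (.s x) u ∧ n = S.cS u := by
  intro x
  induction x with
  | zero =>
    intro fuel n h
    rw [chainO] at h
    exact ⟨T'.init, S.hinit', (Option.some.inj h).symm⟩
  | succ x ih =>
    intro fuel n h
    rw [chainO] at h
    rcases hc : chainO S.fo S.kt S.ka S.n0 fuel x with _ | n'
    · rw [hc] at h; simp at h
    · rw [hc, Option.bind_some] at h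
      obtain ⟨u, hu, rfl⟩ := ih fuel n' hc
      exact S.next_sound_a hu h

lemma chain_total : ∀ x, ∃ fuel₀ n, (∃ u, S.R (.s x) u ∧ n = S.cS u) ∧
    ∀ fuel ≥ fuel₀, chainO S.fo S.kt S.ka S.n0 fuel x = some n := by
  intro x
  induction x with
  | zero =>
    exact ⟨0, S.n0, ⟨T'.init, S.hinit', rfl⟩, fun fuel _ => rfl⟩
  | succ x ih =>
    obtain ⟨f₀, n, ⟨u, hu, rfl⟩, hc⟩ := ih
    obtain ⟨f₁, m, hm, hn⟩ := S.next_total_a hu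
    refine ⟨max f₀ f₁, m, hm, fun fuel hf => ?_⟩
    rw [chainO, hc fuel (le_trans (le_max_left _ _) hf), Option.bind_some,
      hn fuel (le_trans (le_max_right _ _) hf)]

lemma ans_iff {x : ℕ} {v : T'.State} {L : List ℕ} {fuel : ℕ} (hR : S.R (.t x) v)
    (h : clO S.fo S.kt fuel (S.cS v) = some L) :
    ((L.flatMap fun m => if S.ff m = 1 then [m] else []) ≠ []) ↔ T1State.t x ∈ T1.final := by
  obtain ⟨hc, hLc⟩ := (clO_some_iff _ _ _ _ _).1 h
  constructor
  · intro hne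
    obtain ⟨j, hj⟩ := List.exists_mem_of_ne_nil _ hne
    rw [List.mem_flatMap] at hj
    obtain ⟨m, hm, hj⟩ := hj
    have hff1 : S.ff m = 1 := by
      by_contra hf
      rw [if_neg hf] at hj
      simp at hj
    obtain ⟨w, hw, rfl⟩ := S.sound_close v fuel m (hLc ▸ hm)
    have hwf : w ∈ T'.final := by
      by_contra hnf
      rw [(S.hff w).2 hnf] at hff1
      simp at hff1
    exact (S.final_iff hR).2 ⟨w, hw, hwf⟩
  · intro hfin
    obtain ⟨w, hw, hwf⟩ := (S.final_iff hR).1 hfin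
    have hmem : S.cS w ∈ L := by
      rw [hLc]
      exact S.closed_complete (hLc ▸ hc) (self_mem_close _ _ _ _) w hw
    apply List.ne_nil_of_mem (a := S.cS w)
    rw [List.mem_flatMap]
    exact ⟨S.cS w, hmem, by rw [if_pos ((S.hff w).1 hwf)]; simp⟩

lemma G_sound {fuel x : ℕ} {b : Bool}
    (h : GFun S.fo S.ff S.kt S.ka S.kb S.n0 fuel x = some b) : b = true ↔ haltP x := by
  unfold GFun at h
  rcases hc : chainO S.fo S.kt S.ka S.n0 fuel x with _ | n
  · rw [hc] at h; simp at h
  rw [hc, Option.bind_some] at h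
  obtain ⟨u, hu, rfl⟩ := S.chain_sound x fuel n hc
  rcases hn : nextO S.fo S.kt S.kb fuel (S.cS u) with _ | m
  · rw [hn] at h; simp at h
  rw [hn, Option.bind_some] at h
  obtain ⟨v, hv, rfl⟩ := S.next_sound_b hu hn
  rcases hcl : clO S.fo S.kt fuel (S.cS v) with _ | L
  · rw [hcl] at h; simp at h
  rw [hcl, Option.map_some] at h
  cases Option.some.inj h
  rw [decide_eq_true_iff, S.ans_iff hv hcl, T1_final_t]
  exact Iff.rfl

lemma G_total (x : ℕ) : ∃ fuel b, GFun S.fo S.ff S.kt S.ka S.kb S.n0 fuel x = some b := by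
  obtain ⟨f₀, n, ⟨u, hu, rfl⟩, hc⟩ := S.chain_total x
  obtain ⟨f₁, m, ⟨v, hv, rfl⟩, hn⟩ := S.next_total_b hu
  obtain ⟨f₂, L, hL⟩ := S.clO_total hv
  refine ⟨max (max f₀ f₁) f₂,
    decide ((L.flatMap fun m => if S.ff m = 1 then [m] else []) ≠ []), ?_⟩
  unfold GFun
  rw [hc _ (le_trans (le_trans (le_max_left _ _) (le_max_left _ _)) le_rfl),
    Option.bind_some,
    hn _ (le_trans (le_max_right _ _) (le_max_left _ _)),
    Option.bind_some,
    hL _ (le_max_right _ _),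
    Option.map_some]

end Setup

/-! #### Computability of the search procedure -/

section Computability

open Computable

private lemma natrec_iterate {f : List ℕ → List ℕ} :
    ∀ (n : ℕ) (L₀ : List ℕ),
      (Nat.rec L₀ (fun _ IH => f IH) n : List ℕ) = f^[n] L₀ := by
  intro n
  induction n with
  | zero => intro L₀; rfl
  | succ k ih =>
    intro L₀
    show f (Nat.rec L₀ (fun _ IH => f IH) k) = f^[k + 1] L₀
    rw [ih, Function.iterate_succ_apply']

private lemma natrec_flatMap (g : ℕ → List ℕ) (L : List ℕ) :
    ∀ n ≤ L.length,
      (Nat.rec ([] : List ℕ) (fun y IH => IH ++ g (L.getD y 0)) n : List ℕ) =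
        (L.take n).flatMap g := by
  intro n
  induction n with
  | zero => intro _; simp
  | succ k ih =>
    intro hk
    have hk' : k < L.length := hk
    show (Nat.rec ([] : List ℕ) (fun y IH => IH ++ g (L.getD y 0)) k : List ℕ)
        ++ g (L.getD k 0) = _
    rw [ih (le_of_lt hk'), List.take_succ, List.flatMap_append,
      List.getElem?_eq_getElem hk']
    simp [List.getD, List.getElem?_eq_getElem hk']

lemma computable_flatMap {g : ℕ → List ℕ} (hg : Computable g) :
    Computable fun L : List ℕ => L.flatMap g := by
  have h1 : Computable fun L : List ℕ =>
      (Nat.rec ([] : List ℕ) (fun y IH => IH ++ g (L.getD y 0)) L.length : List ℕ) :=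
    Computable.nat_rec (f := fun L : List ℕ => L.length)
      (g := fun _ : List ℕ => ([] : List ℕ))
      (h := fun L q => q.2 ++ g (L.getD q.1 0))
      Primrec.list_length.to_comp (Computable.const [])
      (Computable.list_append.comp (Computable.snd.comp Computable.snd)
        (hg.comp ((Primrec.list_getD 0).to_comp.comp Computable.fst
          (Computable.fst.comp Computable.snd)))).to₂
  apply h1.of_eq
  intro L
  rw [natrec_flatMap g L L.length le_rfl, List.take_length]

variable {fo ff : ℕ → ℕ}

lemma computable_pairsL (hfo : Computable fo) : Computable (pairsL fo) :=
  Computable.option_getD (Computable.decode.comp hfo) (Computable.const [])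

lemma computable_succsL (hfo : Computable fo) (k : ℕ) : Computable (succsL fo k) := by
  have hinner : Primrec₂ fun (_ : List ℕ) (p : ℕ) =>
      if p.unpair.1 = k then [p.unpair.2] else [] := by
    apply Primrec.ite
    · exact Primrec.eq.comp (Primrec.fst.comp (Primrec.unpair.comp Primrec.snd))
        (Primrec.const k)
    · exact Primrec.list_cons.comp (Primrec.snd.comp (Primrec.unpair.comp Primrec.snd))
        (Primrec.const [])
    · exact Primrec.const []
  have h1 : Primrec fun l : List ℕ =>
      l.flatMap fun p => if p.unpair.1 = k then [p.unpair.2] else [] :=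
    Primrec.list_flatMap Primrec.id hinner
  exact (h1.to_comp.comp (computable_pairsL hfo)).of_eq fun n => rfl

lemma computable_stepL (hfo : Computable fo) (kt : ℕ) : Computable (stepL fo kt) := by
  have hA : Computable fun L : List ℕ => L.flatMap (succsL fo kt) :=
    computable_flatMap (computable_succsL hfo kt)
  have hmem : Primrec fun r : (List ℕ × List ℕ) × ℕ => decide (r.2 ∈ r.1.1) := by
    have h1 : Primrec fun r : (List ℕ × List ℕ) × ℕ =>
        decide (r.1.1.idxOf r.2 < r.1.1.length) :=
      (Primrec.nat_lt.comp
        (Primrec.list_idxOf.comp (Primrec.snd) (Primrec.fst.comp Primrec.fst))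
        (Primrec.list_length.comp (Primrec.fst.comp Primrec.fst))).decide
    apply h1.of_eq
    intro r
    exact decide_eq_decide.2 List.idxOf_lt_length_iff
  have hH : Primrec fun q : List ℕ × List ℕ =>
      q.2.flatMap fun m => if m ∈ q.1 then [] else [m] := by
    apply Primrec.list_flatMap Primrec.snd
    apply Primrec.ite
    · exact hmem.primrecPred
    · exact Primrec.const []
    · exact Primrec.list_cons.comp Primrec.snd (Primrec.const [])
  exact (Computable.list_append.comp Computable.id
    (hH.to_comp.comp (Computable.id.pair hA))).of_eq fun L => rfl

lemma computable_closeL (hfo : Computable fo) (kt : ℕ) :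
    Computable fun p : ℕ × ℕ => closeL fo kt p.1 p.2 := by
  have h1 : Computable fun p : ℕ × ℕ =>
      (Nat.rec ([p.2] : List ℕ) (fun _ IH => stepL fo kt IH) p.1 : List ℕ) :=
    Computable.nat_rec (f := fun p : ℕ × ℕ => p.1)
      (g := fun p : ℕ × ℕ => ([p.2] : List ℕ))
      (h := fun _ q => stepL fo kt q.2)
      Computable.fst
      ((Primrec.list_cons.comp Primrec.snd (Primrec.const [])).to_comp)
      (((computable_stepL hfo kt).comp (Computable.snd.comp Computable.snd))).to₂
  apply h1.of_eq
  intro p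
  rw [natrec_iterate]
  rfl

lemma computable_clO (hfo : Computable fo) (kt : ℕ) :
    Computable fun p : ℕ × ℕ => clO fo kt p.1 p.2 := by
  have hcl := computable_closeL hfo kt
  have hc : Computable fun p : ℕ × ℕ =>
      decide (stepL fo kt (closeL fo kt p.1 p.2) = closeL fo kt p.1 p.2) :=
    Primrec.eq.decide.to_comp.comp ((computable_stepL hfo kt).comp hcl) hcl
  have h1 : Computable fun p : ℕ × ℕ =>
      (bif decide (stepL fo kt (closeL fo kt p.1 p.2) = closeL fo kt p.1 p.2) then
        some (closeL fo kt p.1 p.2) else none) :=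
    Computable.cond hc (Computable.option_some.comp hcl) (Computable.const none)
  apply h1.of_eq
  intro p
  by_cases h : stepL fo kt (closeL fo kt p.1 p.2) = closeL fo kt p.1 p.2 <;>
    simp [clO, h]

lemma computable_nextO (hfo : Computable fo) (kt k : ℕ) :
    Computable fun p : ℕ × ℕ => nextO fo kt k p.1 p.2 := by
  have h1 : Computable fun p : ℕ × ℕ =>
      (clO fo kt p.1 p.2).bind fun L => (L.flatMap (succsL fo k)).head? :=
    Computable.option_bind (computable_clO hfo kt)
      (Primrec.list_head?.to_comp.comp
        ((computable_flatMap (computable_succsL hfo k)).comp Computable.snd))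
  exact h1.of_eq fun p => rfl

lemma computable_chainO (hfo : Computable fo) (kt ka n0 : ℕ) :
    Computable fun p : ℕ × ℕ => chainO fo kt ka n0 p.1 p.2 := by
  have h1 : Computable fun p : ℕ × ℕ =>
      (Nat.rec (some n0) (fun _ IH => IH.bind (nextO fo kt ka p.1)) p.2 :
        Option ℕ) :=
    Computable.nat_rec (f := fun p : ℕ × ℕ => p.2)
      (g := fun _ : ℕ × ℕ => (some n0 : Option ℕ))
      (h := fun p q => q.2.bind (nextO fo kt ka p.1))
      Computable.snd (Computable.const (some n0))
      (Computable.option_bind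
        (f := fun r : (ℕ × ℕ) × (ℕ × Option ℕ) => r.2.2)
        (g := fun r (n : ℕ) => nextO fo kt ka r.1.1 n)
        (Computable.snd.comp Computable.snd)
        (((computable_nextO hfo kt ka).comp
          ((Computable.fst.comp (Computable.fst.comp Computable.fst)).pair
            Computable.snd)).to₂)).to₂
  apply h1.of_eq
  intro p
  induction p.2 with
  | zero => rfl
  | succ x ih => show (Nat.rec _ _ x : Option ℕ).bind _ = _; rw [ih]; rfl

lemma computable_ansB (hff : Computable ff) :
    Computable fun L : List ℕ =>
      decide ((L.flatMap fun m => if ff m = 1 then [m] else []) ≠ []) := by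
  have hinner : Computable fun m : ℕ => if ff m = 1 then [m] else [] := by
    have h1 : Computable fun m : ℕ =>
        (bif decide (ff m = 1) then [m] else []) :=
      Computable.cond (Primrec.eq.decide.to_comp.comp hff (Computable.const 1))
        ((Primrec.list_cons.comp Primrec.id (Primrec.const [])).to_comp)
        (Computable.const [])
    apply h1.of_eq
    intro m
    by_cases h : ff m = 1 <;> simp [h]
  have hX : Computable fun L : List ℕ => L.flatMap fun m => if ff m = 1 then [m] else [] :=
    computable_flatMap hinner
  have h1 : Computable fun L : List ℕ =>
      (bif decide ((L.flatMap fun m => if ff m = 1 then [m] else []) = []) then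
        false else true) :=
    Computable.cond (Primrec.eq.decide.to_comp.comp hX (Computable.const []))
      (Computable.const false) (Computable.const true)
  apply h1.of_eq
  intro L
  by_cases h : (L.flatMap fun m => if ff m = 1 then [m] else []) = [] <;> simp [h]

lemma computable_GFun (hfo : Computable fo) (hff : Computable ff) (kt ka kb n0 : ℕ) :
    Computable fun p : ℕ × ℕ => GFun fo ff kt ka kb n0 p.1 p.2 := by
  have h1 : Computable fun p : ℕ × ℕ =>
      (chainO fo kt ka n0 p.1 p.2).bind fun n =>
      (nextO fo kt kb p.1 n).bind fun v =>
      (clO fo kt p.1 v).map fun L =>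
        decide ((L.flatMap fun m => if ff m = 1 then [m] else []) ≠ []) := by
    apply Computable.option_bind (computable_chainO hfo kt ka n0)
    apply Computable.option_bind
      ((computable_nextO hfo kt kb).comp
        ((Computable.fst.comp Computable.fst).pair Computable.snd))
    apply Computable.option_map
      ((computable_clO hfo kt).comp
        ((Computable.fst.comp (Computable.fst.comp Computable.fst)).pair Computable.snd))
    exact (computable_ansB hff).comp Computable.snd
  exact h1.of_eq fun p => rfl

end Computability

/-! #### The diagonal halting predicate is not computable -/

lemma haltP_not_computable : ¬ ComputablePred haltP := by
  intro h
  obtain ⟨f, hf, hpf⟩ := ComputablePred.computable_iff.1 h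
  have hq : Partrec fun x : ℕ =>
      ((bif f x then none else some 0 : Option ℕ) : Part ℕ) :=
    Computable.ofOption
      (Computable.cond hf (Computable.const none) (Computable.const (some 0)))
  obtain ⟨c, hc⟩ := Nat.Partrec.Code.exists_code.1 (Partrec.nat_iff.1 hq)
  have hofnat : Denumerable.ofNat Nat.Partrec.Code (Encodable.encode c) = c :=
    Denumerable.ofNat_encode c
  have hdom : haltP (Encodable.encode c) ↔
      (((bif f (Encodable.encode c) then none else some 0 : Option ℕ) : Part ℕ)).Dom := by
    unfold haltP
    rw [hofnat, hc]
  have hp : haltP (Encodable.encode c) ↔ f (Encodable.encode c) = true := by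
    rw [hpf]
  cases hfx : f (Encodable.encode c) with
  | false =>
    rw [hfx] at hdom hp
    simp at hdom hp
    exact hp hdom
  | true =>
    rw [hfx] at hdom hp
    simp at hdom hp
    exact hdom hp

/-- The decision procedure for the halting problem obtained from the setup. -/
lemma Setup.haltP_computable {T' : LTS AB} (S : Setup T') : ComputablePred haltP := by
  classical
  rw [ComputablePred.computable_iff]
  refine ⟨fun x => decide (haltP x), ?_, by funext x; simp⟩
  have hG : Computable fun p : ℕ × ℕ =>
      GFun S.fo S.ff S.kt S.ka S.kb S.n0 p.1 p.2 :=
    computable_GFun S.cfo S.cff S.kt S.ka S.kb S.n0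
  have hGswap : Computable fun q : ℕ × ℕ =>
      GFun S.fo S.ff S.kt S.ka S.kb S.n0 q.2 q.1 :=
    hG.comp (Computable.snd.pair Computable.fst)
  have hIs : Computable₂ fun (x fuel : ℕ) =>
      (GFun S.fo S.ff S.kt S.ka S.kb S.n0 fuel x).isSome :=
    (Primrec.option_isSome.to_comp.comp hGswap).to₂
  have hrfind : Partrec fun x : ℕ =>
      Nat.rfind fun fuel =>
        (Part.some ((GFun S.fo S.ff S.kt S.ka S.kb S.n0 fuel x).isSome) : Part Bool) :=
    Partrec.rfind hIs.partrec₂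
  have hF : Partrec fun x : ℕ =>
      (Nat.rfind fun fuel =>
        (Part.some ((GFun S.fo S.ff S.kt S.ka S.kb S.n0 fuel x).isSome) : Part Bool)).bind
        fun fuel => (GFun S.fo S.ff S.kt S.ka S.kb S.n0 fuel x : Part Bool) :=
    hrfind.bind
      ((Computable.ofOption (hG.comp (Computable.snd.pair Computable.fst))).to₂)
  apply Partrec.of_eq_tot hF
  intro x
  obtain ⟨fuel₁, b₁, hG₁⟩ := S.G_total x
  have hdom : (Nat.rfind fun fuel =>
      (Part.some ((GFun S.fo S.ff S.kt S.ka S.kb S.n0 fuel x).isSome) : Part Bool)).Dom := by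
    refine Nat.rfind_dom.2 ⟨fuel₁, ?_, fun _ => trivial⟩
    beta_reduce
    rw [hG₁]
    exact Part.mem_some_iff.2 rfl
  set fuelstar := (Nat.rfind fun fuel =>
      (Part.some ((GFun S.fo S.ff S.kt S.ka S.kb S.n0 fuel x).isSome) : Part Bool)).get hdom
    with hfs
  have hmem := Part.get_mem hdom
  have hspec := Nat.rfind_spec hmem
  have hsome : (GFun S.fo S.ff S.kt S.ka S.kb S.n0 fuelstar x).isSome = true :=
    Part.mem_some_iff.1 hspec |>.symm
  obtain ⟨b, hb⟩ := Option.isSome_iff_exists.1 hsome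
  have hbval : b = decide (haltP x) := by
    have hiff := S.G_sound hb
    cases hd : decide (haltP x)
    · cases hbv : b
      · rfl
      · rw [hbv] at hiff
        rw [decide_eq_false_iff_not] at hd
        exact absurd (hiff.1 rfl) hd
    · cases hbv : b
      · rw [hbv] at hiff
        rw [decide_eq_true_iff] at hd
        simp at hiff
        exact absurd hd hiff
      · rfl
  rw [Part.mem_bind_iff]
  refine ⟨fuelstar, hmem, ?_⟩
  rw [Part.mem_ofOption]
  rw [hb, hbval]
  rfl

end Statement3Aux


/-- No computable transition system is divergence-preserving
branching bisimilar to `T₁`. -/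
theorem T1_not_simulable_divergence_preservingly :
    ∀ T' : LTS AB, T'.IsComputable → ¬ DPBranchingBisimilar T1 T' := by
  intro T' hComp hBis
  obtain ⟨hfb, cL, cS, injL, injS, ⟨fo, cfo, hfo⟩, ⟨ff, cff, hff⟩⟩ := hComp
  obtain ⟨R, hB, hD, hinit⟩ := hBis
  exact haltP_not_computable
    (Setup.haltP_computable
      ⟨R, hB, hD, hfb, cL, cS, injL, injS, fo, cfo, hfo, ff, cff, hff, hinit⟩)

end RTMPaper
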